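/- If α, β are 1-forms on a smooth manifold M with dα = α ∧ β, and γ is a 1-form with dβ = α ∧ γ, then the 3-form β ∧ dβ is closed. -/
import Mathlib


/-- An abstract algebra of (differential) forms on a smooth manifold `M`: a normed
`ℝ`-algebra `Ω` (the algebra of smooth differential forms, normed so that one can
speak of smooth/differentiable one-parameter families), equipped with a grading
predicate `IsDeg n a` ("`a` is a homogeneous form of degree `n`") and an exterior
differential `d`, a continuous linear map satisfying the graded Leibniz rule,
graded commutativity and `d ∘ d = 0`. -/
class FormAlgebra (Ω : Type*) [NormedRing Ω] [NormedAlgebra ℝ Ω] where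
  /-- `IsDeg n a` means that `a` is a homogeneous form of degree `n`. -/
  IsDeg : ℕ → Ω → Prop
  /-- The exterior differential. -/
  d : Ω →L[ℝ] Ω
  isDeg_d : ∀ {n : ℕ} {a : Ω}, IsDeg n a → IsDeg (n + 1) (d a)
  isDeg_mul : ∀ {m n : ℕ} {a b : Ω}, IsDeg m a → IsDeg n b → IsDeg (m + n) (a * b)
  d_mul : ∀ {m : ℕ} (a b : Ω), IsDeg m a →
    d (a * b) = d a * b + (-1 : ℝ) ^ m • (a * d b)
  deg_mul_comm : ∀ {m n : ℕ} (a b : Ω), IsDeg m a → IsDeg n b →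
    a * b = (-1 : ℝ) ^ (m * n) • (b * a)
  d_d : ∀ a : Ω, d (d a) = 0

open FormAlgebra

/-- If `α, β` are 1-forms with `dα = α ∧ β` and `γ` is a 1-form with
`dβ = α ∧ γ`, then the 3-form `β ∧ dβ` is closed. -/
theorem statement1 {Ω : Type*} [NormedRing Ω] [NormedAlgebra ℝ Ω] [FormAlgebra Ω]
    (α β γ : Ω) (hα : IsDeg 1 α) (hβ : IsDeg 1 β) (hγ : IsDeg 1 γ)
    (h1 : d α = α * β) (h2 : d β = α * γ) :
    d (β * d β) = 0 := by
  have haa : α * α = 0 := by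
    have h := deg_mul_comm (m := 1) (n := 1) α α hα hα
    simp only [pow_one, neg_smul, one_smul, mul_one] at h
    have h2 : (2 : ℝ) • (α * α) = 0 := by
      rw [two_smul]
      nth_rewrite 1 [h]
      simp
    have := smul_eq_zero.mp h2
    simpa using this
  have hga : γ * α = -(α * γ) := by
    have h := deg_mul_comm (m := 1) (n := 1) γ α hγ hα
    simpa using h
  have key : (α * γ) * (α * γ) = 0 := by
    calc (α * γ) * (α * γ) = α * (γ * α) * γ := by rw [mul_assoc, mul_assoc, mul_assoc]
    _ = -(α * α * (γ * γ)) := by rw [hga]; rw [mul_neg, neg_mul]; rw [mul_assoc, mul_assoc, mul_assoc]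
    _ = 0 := by rw [haa]; simp
  rw [d_mul (m := 1) β (d β) hβ, d_d β]
  rw [h2, key]
  simp
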